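/- Let A⁰ and A¹ be two Hermitian operators on a finite-dimensional complex Hilbert space, each having exactly two eigenvalues, 1 and -1. Then there exists an orthogonal decomposition of the Hilbert space into subspaces of dimension at most 2, each of which is invariant under both A⁰ and A¹. -/

import Mathlib

open Module Submodule

/-- Key induction: any invariant subspace decomposes into ≤2-dim invariant pieces. -/
lemma jordan_aux {E : Type*} [NormedAddCommGroup E] [InnerProductSpace ℂ E]
    [FiniteDimensional ℂ E] (T0 T1 : E →ₗ[ℂ] E)
    (h0 : T0.IsSymmetric) (h1 : T1.IsSymmetric)
    (hq0 : T0 ∘ₗ T0 = LinearMap.id) (hq1 : T1 ∘ₗ T1 = LinearMap.id) :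
    ∀ (m : ℕ) (V : Submodule ℂ E), finrank ℂ V ≤ m →
      V.map T0 ≤ V → V.map T1 ≤ V →
    ∃ (k : ℕ) (W : Fin k → Submodule ℂ E),
      (∀ i, W i ≤ V) ∧ (∀ i, finrank ℂ (W i) ≤ 2) ∧
      (∀ i j, i ≠ j → ∀ v ∈ W i, ∀ w ∈ W j, (inner ℂ v w : ℂ) = 0) ∧
      (⨆ i, W i) = V ∧
      (∀ i, (W i).map T0 ≤ W i) ∧ (∀ i, (W i).map T1 ≤ W i) := by
  have hq0' : ∀ x, T0 (T0 x) = x := fun x => LinearMap.congr_fun hq0 x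
  have hq1' : ∀ x, T1 (T1 x) = x := fun x => LinearMap.congr_fun hq1 x
  intro m
  induction m with
  | zero =>
    intro V hV _ _
    have : V = ⊥ := Submodule.finrank_eq_zero.mp (Nat.le_zero.mp hV)
    subst this
    exact ⟨0, Fin.elim0, fun i => i.elim0, fun i => i.elim0, fun i => i.elim0,
      by simp, fun i => i.elim0, fun i => i.elim0⟩
  | succ m ih =>
    intro V hV hV0 hV1
    by_cases hbot : V = ⊥
    · subst hbot
      exact ⟨0, Fin.elim0, fun i => i.elim0, fun i => i.elim0, fun i => i.elim0,
        by simp, fun i => i.elim0, fun i => i.elim0⟩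
    -- the commuting Hermitian operator
    set C : E →ₗ[ℂ] E := T0 ∘ₗ T1 + T1 ∘ₗ T0 with hC
    have hCapp : ∀ x, C x = T0 (T1 x) + T1 (T0 x) := fun x => rfl
    have hCT0 : ∀ x, C (T0 x) = T0 (C x) := by
      intro x
      simp only [hCapp, map_add, hq0']
      exact add_comm _ _
    have hVC : ∀ x ∈ V, C x ∈ V := by
      intro x hx
      rw [hCapp]
      exact add_mem (hV0 ⟨T1 x, hV1 ⟨x, hx, rfl⟩, rfl⟩) (hV1 ⟨T0 x, hV0 ⟨x, hx, rfl⟩, rfl⟩)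
    -- an eigenvector of C inside V
    haveI : Nontrivial V := Submodule.nontrivial_iff_ne_bot.mpr hbot
    obtain ⟨μ, hμ⟩ := Module.End.exists_eigenvalue (C.restrict hVC)
    obtain ⟨u, hu⟩ := hμ.exists_hasEigenvector
    -- the eigenspace inside V
    set U : Submodule ℂ E := V ⊓ Module.End.eigenspace C μ with hU
    have huU : (u : E) ∈ U := by
      refine ⟨u.2, Module.End.mem_eigenspace_iff.mpr ?_⟩
      have := Module.End.mem_eigenspace_iff.mp hu.1
      exact congrArg Subtype.val this
    haveI : Nontrivial U := by
      refine Submodule.nontrivial_iff_ne_bot.mpr fun h => ?_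
      have : (u : E) = 0 := by simpa [h] using huU
      exact hu.2 (Subtype.coe_injective this)
    have hUT0 : ∀ x ∈ U, T0 x ∈ U := by
      rintro x ⟨hxV, hxE⟩
      refine ⟨hV0 ⟨x, hxV, rfl⟩, Module.End.mem_eigenspace_iff.mpr ?_⟩
      rw [hCT0, Module.End.mem_eigenspace_iff.mp hxE, map_smul]
    -- an eigenvector of T0 inside U
    obtain ⟨ν, hν⟩ := Module.End.exists_eigenvalue (T0.restrict hUT0)
    obtain ⟨v, hv⟩ := hν.exists_hasEigenvector
    have hvne : (v : E) ≠ 0 := fun h => hv.2 (Subtype.coe_injective h)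
    have hvU : (v : E) ∈ U := v.2
    have hvV : (v : E) ∈ V := hvU.1
    have hvT0 : T0 v = ν • (v : E) :=
      congrArg Subtype.val (Module.End.mem_eigenspace_iff.mp hv.1)
    have hvC : C v = μ • (v : E) := Module.End.mem_eigenspace_iff.mp hvU.2
    -- the 2-dim invariant subspace
    set W0 : Submodule ℂ E := Submodule.span ℂ {(v : E), T1 v} with hW0
    have hvW0 : (v : E) ∈ W0 := subset_span (by simp)
    have hT1vW0 : T1 (v : E) ∈ W0 := subset_span (by simp)
    have hW0V : W0 ≤ V := by
      rw [hW0, span_le]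
      rintro x (rfl | rfl)
      exacts [hvV, hV1 ⟨v, hvV, rfl⟩]
    have hsingle : ∀ x : E, finrank ℂ (span ℂ ({x} : Set E)) ≤ 1 := by
      intro x
      rcases eq_or_ne x 0 with rfl | hx
      · rw [Submodule.span_zero_singleton, finrank_bot]
        omega
      · rw [finrank_span_singleton hx]
    have hW0rank : finrank ℂ W0 ≤ 2 := by
      rw [hW0, show ({(v : E), T1 v} : Set E) = insert (v : E) {T1 (v : E)} from rfl,
        Submodule.span_insert]
      calc finrank ℂ ↥(span ℂ {(v : E)} ⊔ span ℂ {T1 (v : E)})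
          ≤ finrank ℂ (span ℂ ({(v : E)} : Set E)) +
            finrank ℂ (span ℂ ({T1 (v : E)} : Set E)) :=
            Submodule.finrank_add_le_finrank_add_finrank _ _
        _ ≤ 2 := by have := hsingle (v : E); have := hsingle (T1 (v : E)); omega
    have hW0T1 : W0.map T1 ≤ W0 := by
      rw [map_le_iff_le_comap, hW0, span_le]
      rintro x (rfl | rfl) <;> simp only [SetLike.mem_coe, mem_comap]
      · exact hT1vW0
      · rw [hq1']
        exact hvW0
    have hW0T0 : W0.map T0 ≤ W0 := by
      rw [map_le_iff_le_comap, hW0, span_le]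
      rintro x (rfl | rfl) <;> simp only [SetLike.mem_coe, mem_comap]
      · rw [hvT0]
        exact smul_mem _ _ hvW0
      · have : T0 (T1 (v : E)) = μ • (v : E) - ν • T1 (v : E) := by
          have h1 : T0 (T1 (v : E)) + T1 (T0 (v : E)) = μ • (v : E) := by
            rw [← hCapp, hvC]
          rw [hvT0, map_smul] at h1
          linear_combination (norm := module) h1
        rw [this]
        exact sub_mem (smul_mem _ _ hvW0) (smul_mem _ _ hT1vW0)
    have hW0ne : W0 ≠ ⊥ := fun h => hvne (by simpa [h] using hvW0)
    -- the orthogonal complement inside V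
    set V' : Submodule ℂ E := W0ᗮ ⊓ V with hV'
    have hV'T : ∀ (T : E →ₗ[ℂ] E), T.IsSymmetric → V.map T ≤ V → W0.map T ≤ W0 →
        V'.map T ≤ V' := by
      rintro T hT hTV hTW _ ⟨x, ⟨hx1, hx2⟩, rfl⟩
      refine ⟨?_, hTV ⟨x, hx2, rfl⟩⟩
      intro w hw
      rw [← hT w x]
      exact hx1 _ (hTW ⟨w, hw, rfl⟩)
    have hsup : W0 ⊔ V' = V := Submodule.sup_orthogonal_inf_of_hasOrthogonalProjection hW0V
    have hrank : finrank ℂ V' ≤ m := by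
      have hdisj : W0 ⊓ V' = ⊥ := by
        rw [eq_bot_iff]
        exact le_trans (inf_le_inf_left _ inf_le_left) (by rw [inf_orthogonal_eq_bot])
      have := Submodule.finrank_sup_add_finrank_inf_eq W0 V'
      rw [hsup, hdisj, finrank_bot, add_zero] at this
      have hpos : 0 < finrank ℂ W0 := finrank_pos_iff.mpr (nontrivial_iff_ne_bot.mpr hW0ne)
      omega
    obtain ⟨k, W, hWle, hWrank, hWorth, hWsup, hWT0, hWT1⟩ :=
      ih V' hrank (hV'T T0 h0 hV0 hW0T0) (hV'T T1 h1 hV1 hW0T1)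
    refine ⟨k + 1, Fin.cons W0 W, ?_, ?_, ?_, ?_, ?_, ?_⟩
    · intro i
      refine Fin.cases ?_ ?_ i
      · exact hW0V
      · exact fun j => (hWle j).trans inf_le_right
    · intro i
      refine Fin.cases hW0rank (fun j => hWrank j) i
    · intro i j hij
      induction i using Fin.cases with
      | zero =>
        induction j using Fin.cases with
        | zero => exact absurd rfl hij
        | succ j' =>
          intro x hx y hy
          rw [Fin.cons_zero] at hx
          rw [Fin.cons_succ] at hy
          exact Submodule.inner_right_of_mem_orthogonal hx
            (((hWle j').trans inf_le_left) hy)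
      | succ i' =>
        induction j using Fin.cases with
        | zero =>
          intro x hx y hy
          rw [Fin.cons_succ] at hx
          rw [Fin.cons_zero] at hy
          exact Submodule.inner_left_of_mem_orthogonal hy
            (((hWle i').trans inf_le_left) hx)
        | succ j' =>
          intro x hx y hy
          rw [Fin.cons_succ] at hx hy
          exact hWorth i' j' (fun h => hij (congrArg Fin.succ h)) x hx y hy
    · rw [← hsup, ← hWsup]
      exact le_antisymm (iSup_le (Fin.cases le_sup_left
          (fun j => le_trans (le_iSup W j) le_sup_right)))
        (sup_le (le_iSup (Fin.cons W0 W) 0)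
          (iSup_le fun j => le_iSup (Fin.cons W0 W) j.succ))
    · intro i
      refine Fin.cases hW0T0 (fun j => hWT0 j) i
    · intro i
      refine Fin.cases hW0T1 (fun j => hWT1 j) i

open Matrix in
lemma toEuclideanLin_comp_self {n : ℕ} (A : Matrix (Fin n) (Fin n) ℂ) (h : A * A = 1) :
    Matrix.toEuclideanLin A ∘ₗ Matrix.toEuclideanLin A = LinearMap.id := by
  apply LinearMap.ext
  intro x
  simp only [LinearMap.comp_apply, LinearMap.id_apply, Matrix.toEuclideanLin_apply,
    Equiv.apply_symm_apply, Matrix.mulVec_mulVec, h, Matrix.one_mulVec, Equiv.symm_apply_apply]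

open Matrix in
lemma sq_eq_one_of_spectrum {n : ℕ} (A : Matrix (Fin n) (Fin n) ℂ) (hA : A.IsHermitian)
    (hs : spectrum ℂ A = {1, -1}) : A * A = 1 := by
  have hev : ∀ i, (hA.eigenvalues i) ^ 2 = 1 := by
    intro i
    have h1 : (algebraMap ℝ ℂ) (hA.eigenvalues i) ∈ spectrum ℂ A :=
      spectrum.algebraMap_mem ℂ (hA.eigenvalues_mem_spectrum_real i)
    rw [hs] at h1
    rcases h1 with h | h
    · have : hA.eigenvalues i = 1 := by
        have := h
        simp only [Complex.coe_algebraMap] at this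
        exact_mod_cast this
      rw [this]; norm_num
    · have : hA.eigenvalues i = -1 := by
        simp only [Set.mem_singleton_iff, Complex.coe_algebraMap] at h
        exact_mod_cast h
      rw [this]; norm_num
  conv_lhs => rw [hA.spectral_theorem]
  have hU : (star (hA.eigenvectorUnitary : Matrix (Fin n) (Fin n) ℂ)) *
      (hA.eigenvectorUnitary : Matrix (Fin n) (Fin n) ℂ) = 1 :=
    Matrix.mem_unitaryGroup_iff'.mp hA.eigenvectorUnitary.2
  have hUU : (hA.eigenvectorUnitary : Matrix (Fin n) (Fin n) ℂ) *
      (star (hA.eigenvectorUnitary : Matrix (Fin n) (Fin n) ℂ)) = 1 :=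
    Matrix.mem_unitaryGroup_iff.mp hA.eigenvectorUnitary.2
  calc (hA.eigenvectorUnitary : Matrix (Fin n) (Fin n) ℂ) *
        diagonal (RCLike.ofReal ∘ hA.eigenvalues) *
        (star (hA.eigenvectorUnitary : Matrix (Fin n) (Fin n) ℂ)) *
        ((hA.eigenvectorUnitary : Matrix (Fin n) (Fin n) ℂ) *
        diagonal (RCLike.ofReal ∘ hA.eigenvalues) *
        (star (hA.eigenvectorUnitary : Matrix (Fin n) (Fin n) ℂ)))
      = (hA.eigenvectorUnitary : Matrix (Fin n) (Fin n) ℂ) *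
        (diagonal (RCLike.ofReal ∘ hA.eigenvalues) *
         diagonal (RCLike.ofReal ∘ hA.eigenvalues)) *
        (star (hA.eigenvectorUnitary : Matrix (Fin n) (Fin n) ℂ)) := by
        rw [Matrix.mul_assoc, Matrix.mul_assoc, Matrix.mul_assoc, ← Matrix.mul_assoc _ _
          (diagonal (RCLike.ofReal ∘ hA.eigenvalues) * _), hU, Matrix.one_mul,
          Matrix.mul_assoc, Matrix.mul_assoc]
    _ = 1 := by
        rw [Matrix.diagonal_mul_diagonal]
        have : (fun i => (RCLike.ofReal ∘ hA.eigenvalues) i *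
            (RCLike.ofReal ∘ hA.eigenvalues) i) = fun _ => (1 : ℂ) := by
          funext i
          have := hev i
          have h2 : ((hA.eigenvalues i : ℝ) : ℂ) * ((hA.eigenvalues i : ℝ) : ℂ) = 1 := by
            rw [← Complex.ofReal_mul, ← sq, this, Complex.ofReal_one]
          simpa using h2
        rw [this, Matrix.diagonal_one, Matrix.mul_one, hUU]

/-- Jordan's lemma: two Hermitian operators on a finite-dimensional complex
Hilbert space, each with spectrum exactly `{1, -1}`, admit a common orthogonal
decomposition of the space into invariant subspaces of dimension at most 2. -/
theorem stmt18 {n : ℕ} (A0 A1 : Matrix (Fin n) (Fin n) ℂ)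
    (hA0 : A0.IsHermitian) (hA1 : A1.IsHermitian)
    (hs0 : spectrum ℂ A0 = {1, -1}) (hs1 : spectrum ℂ A1 = {1, -1}) :
    ∃ (k : ℕ) (W : Fin k → Submodule ℂ (EuclideanSpace ℂ (Fin n))),
      (∀ i, Module.finrank ℂ (W i) ≤ 2) ∧
      (∀ i j, i ≠ j → ∀ v ∈ W i, ∀ w ∈ W j, (inner ℂ v w : ℂ) = 0) ∧
      (⨆ i, W i) = ⊤ ∧
      (∀ i, (W i).map (Matrix.toEuclideanLin A0) ≤ W i) ∧
      (∀ i, (W i).map (Matrix.toEuclideanLin A1) ≤ W i) := by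
  obtain ⟨k, W, _, h2, h3, h4, h5, h6⟩ :=
    jordan_aux (Matrix.toEuclideanLin A0) (Matrix.toEuclideanLin A1)
      (Matrix.isHermitian_iff_isSymmetric.mp hA0)
      (Matrix.isHermitian_iff_isSymmetric.mp hA1)
      (toEuclideanLin_comp_self A0 (sq_eq_one_of_spectrum A0 hA0 hs0))
      (toEuclideanLin_comp_self A1 (sq_eq_one_of_spectrum A1 hA1 hs1))
      (Module.finrank ℂ (EuclideanSpace ℂ (Fin n)))
      ⊤ (by rw [finrank_top]) le_top le_top
  exact ⟨k, W, h2, h3, h4, h5, h6⟩
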